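/- Let H be a complex Hilbert space and T : H → H a continuous linear operator. Then the numerical range W(T) = { ⟨T x, x⟩ : x ∈ H, ‖x‖ = 1 } is a convex subset of ℂ. -/

import Mathlib

open scoped InnerProductSpace
open Complex

lemma pick_lambda (w : ℂ) : ∃ l : ℂ, ‖l‖ = 1 ∧ (starRingEnd ℂ) (l * w) = l * w := by
  by_cases hw : w = 0
  · exact ⟨1, by simp [hw]⟩
  · refine ⟨(starRingEnd ℂ) w / (‖w‖ : ℂ), ?_, ?_⟩
    · simp [map_div₀, hw]
    · have : (starRingEnd ℂ) w / (‖w‖ : ℂ) * w = (‖w‖ : ℂ) := by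
        rw [div_mul_eq_mul_div, mul_comm, Complex.mul_conj, Complex.normSq_eq_norm_sq]
        push_cast
        rw [pow_two, mul_div_assoc, div_self (by exact_mod_cast (norm_ne_zero_iff.mpr hw)), mul_one]
      rw [this]; simp

lemma th_aux {H : Type*} [NormedAddCommGroup H] [InnerProductSpace ℂ H]
    (S : H →L[ℂ] H) (p q : H) (hp : ‖p‖ = 1) (hq : ‖q‖ = 1)
    (hSp : ⟪S p, p⟫_ℂ = 0) (hSq : ⟪S q, q⟫_ℂ = 1)
    (t : ℝ) (ht0 : 0 ≤ t) (ht1 : t ≤ 1) :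
    ∃ w : H, ‖w‖ = 1 ∧ ⟪S w, w⟫_ℂ = (t : ℂ) := by
  obtain ⟨l, hl1, hlreal⟩ := pick_lambda (⟪S p, q⟫_ℂ - (starRingEnd ℂ) ⟪S q, p⟫_ℂ)
  set q' : H := l • q with hq'def
  have hq'norm : ‖q'‖ = 1 := by
    rw [hq'def, norm_smul, hq, mul_one]; exact hl1
  have hSq' : ⟪S q', q'⟫_ℂ = 1 := by
    rw [hq'def, map_smul, inner_smul_left, inner_smul_right, hSq, mul_one,
      ← Complex.normSq_eq_conj_mul_self, ← Complex.sq_norm, hl1]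
    norm_num
  -- cross term is real
  have cross_real : (starRingEnd ℂ) (⟪S p, q'⟫_ℂ + ⟪S q', p⟫_ℂ) = ⟪S p, q'⟫_ℂ + ⟪S q', p⟫_ℂ := by
    have e1 : ⟪S p, q'⟫_ℂ = l * ⟪S p, q⟫_ℂ := by rw [hq'def, inner_smul_right]
    have e2 : ⟪S q', p⟫_ℂ = (starRingEnd ℂ) l * ⟪S q, p⟫_ℂ := by
      rw [hq'def, map_smul, inner_smul_left]
    rw [e1, e2, map_add, map_mul, map_mul, RingHomCompTriple.comp_apply, RingHom.id_apply]
    have := hlreal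
    rw [map_mul, map_sub, RingHomCompTriple.comp_apply, RingHom.id_apply] at this
    ring_nf
    ring_nf at this
    linear_combination this
  obtain ⟨r, hr⟩ : ∃ r : ℝ, ⟪S p, q'⟫_ℂ + ⟪S q', p⟫_ℂ = (r : ℂ) :=
    Complex.conj_eq_iff_real.mp cross_real
  -- the path
  set u : ℝ → H := fun s => ((1 - s : ℝ) : ℂ) • p + ((s : ℝ) : ℂ) • q' with hu
  have hval : ∀ s : ℝ, ⟪S (u s), u s⟫_ℂ = ((s ^ 2 + s * (1 - s) * r : ℝ) : ℂ) := by
    intro s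
    simp only [hu, map_add, map_smul, inner_add_left, inner_add_right, inner_smul_left,
      inner_smul_right, Complex.conj_ofReal, hSp, hSq']
    push_cast
    linear_combination ((s:ℂ) * (1 - (s:ℂ))) * hr
  have hune : ∀ s ∈ Set.Icc (0:ℝ) 1, u s ≠ 0 := by
    intro s hs h0
    have h1 : ((1 - s : ℝ) : ℂ) • p = -(((s : ℝ) : ℂ) • q') := by
      rw [hu] at h0; simp only at h0; linear_combination (norm := module) h0
    have hn : |1 - s| = |s| := by
      have := congrArg norm h1
      rwa [norm_smul, norm_neg, norm_smul, hp, hq'norm, mul_one, mul_one,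
        Complex.norm_real, Complex.norm_real, Real.norm_eq_abs, Real.norm_eq_abs] at this
    rw [_root_.abs_of_nonneg (by linarith [hs.2]), _root_.abs_of_nonneg hs.1] at hn
    have hshalf : s = 1/2 := by linarith
    have hpq : p = -q' := by
      rw [hshalf] at h1
      have : ((1:ℂ)/2) • p = ((1:ℂ)/2) • (-q') := by
        push_cast at h1 ⊢
        rw [smul_neg]
        convert h1 using 2 <;> norm_num
      have h2 := congrArg (fun v => ((2:ℂ)) • v) this
      simpa [smul_smul] using h2
    rw [hpq] at hSp
    simp only [map_neg, inner_neg_neg] at hSp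
    rw [hSq'] at hSp
    norm_num at hSp
  -- IVT
  set g : ℝ → ℝ := fun s => (s ^ 2 + s * (1 - s) * r) / ‖u s‖ ^ 2 with hg
  have hu0 : u 0 = p := by simp [hu]
  have hu1 : u 1 = q' := by simp [hu]
  have hg0 : g 0 = 0 := by simp [hg]
  have hg1 : g 1 = 1 := by simp [hg, hu1, hq'norm]
  have hcont : ContinuousOn g (Set.Icc 0 1) := by
    apply ContinuousOn.div
    · fun_prop
    · apply Continuous.continuousOn; fun_prop
    · intro s hs
      exact pow_ne_zero 2 (norm_ne_zero_iff.mpr (hune s hs))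
  have hmem : t ∈ Set.Icc (g 0) (g 1) := by rw [hg0, hg1]; exact ⟨ht0, ht1⟩
  obtain ⟨s, hs, hgs⟩ := intermediate_value_Icc (by norm_num : (0:ℝ) ≤ 1) hcont hmem
  have hne : ‖u s‖ ≠ 0 := norm_ne_zero_iff.mpr (hune s hs)
  refine ⟨((‖u s‖⁻¹ : ℝ) : ℂ) • u s, ?_, ?_⟩
  · rw [norm_smul, Complex.norm_real, Real.norm_eq_abs,
      _root_.abs_of_nonneg (inv_nonneg.mpr (norm_nonneg _)), inv_mul_cancel₀ hne]
  · rw [map_smul, inner_smul_left, inner_smul_right, hval s]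
    rw [← hgs, hg]
    have : (starRingEnd ℂ) ((‖u s‖⁻¹ : ℝ) : ℂ) = ((‖u s‖⁻¹ : ℝ) : ℂ) := Complex.conj_ofReal _
    rw [this]
    push_cast
    field_simp
theorem toeplitz_hausdorff
    {H : Type*} [NormedAddCommGroup H] [InnerProductSpace ℂ H] [CompleteSpace H]
    (T : H →L[ℂ] H) :
    Convex ℝ {z : ℂ | ∃ x : H, ‖x‖ = 1 ∧ ⟪T x, x⟫_ℂ = z} := by
  rintro z₁ ⟨x, hx, hTx⟩ z₂ ⟨y, hy, hTy⟩ t1 t2 ht1 ht2 hsum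
  by_cases hz : z₁ = z₂
  · refine ⟨x, hx, ?_⟩
    rw [hTx, hz]
    have : (t1 : ℂ) + (t2 : ℂ) = 1 := by exact_mod_cast congrArg (Complex.ofReal ·) hsum
    simp only [smul_eq_mul, Complex.real_smul]
    linear_combination (-z₂) * this
  · have hd : z₁ - z₂ ≠ 0 := sub_ne_zero.mpr hz
    set c : ℂ := (z₁ - z₂)⁻¹ with hc
    set S : H →L[ℂ] H :=
      (starRingEnd ℂ) c • T + (starRingEnd ℂ) (-z₂ * c) • (ContinuousLinearMap.id ℂ H) with hS
    have hval : ∀ v : H, ‖v‖ = 1 → ⟪S v, v⟫_ℂ = (⟪T v, v⟫_ℂ - z₂) * c := by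
      intro v hv
      have hvv : ⟪v, v⟫_ℂ = 1 := by
        rw [inner_self_eq_norm_sq_to_K, hv]; norm_num
      rw [hS]
      simp only [ContinuousLinearMap.add_apply, ContinuousLinearMap.smul_apply,
        ContinuousLinearMap.id_apply, inner_add_left, inner_smul_left,
        RingHomCompTriple.comp_apply, RingHom.id_apply, hvv]
      ring
    have hSx : ⟪S x, x⟫_ℂ = 1 := by
      rw [hval x hx, hTx, hc, mul_comm, inv_mul_cancel₀ hd]
    have hSy : ⟪S y, y⟫_ℂ = 0 := by
      rw [hval y hy, hTy]; simp
    have ht1' : t1 ≤ 1 := by linarith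
    obtain ⟨w, hw, hSw⟩ := th_aux S y x hy hx hSy hSx t1 ht1 ht1'
    refine ⟨w, hw, ?_⟩
    have := hval w hw
    rw [hSw] at this
    have hT : ⟪T w, w⟫_ℂ = (t1 : ℂ) * (z₁ - z₂) + z₂ := by
      rw [this, hc, mul_assoc, inv_mul_cancel₀ hd, mul_one]; ring
    rw [hT]
    have ht2eq : (t2 : ℂ) = 1 - (t1 : ℂ) := by
      have : (t1 : ℂ) + (t2 : ℂ) = 1 := by exact_mod_cast congrArg (Complex.ofReal ·) hsum
      linear_combination this
    simp only [Complex.real_smul]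
    rw [ht2eq]
    ring
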